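/- arXiv:1505.07634 — 5 statements merged into one kernel-verified Lean document; each statement's English description precedes it below -/
import Mathlib

section
/- For any loss ℓ : {±1} × ℝ → ℝ, any ρ ∈ [0, 1/2), any distribution D, and any scorer s : X → ℝ, the ℓ-risk of s on D equals the ℓ̄-risk of s on SLN(D, ρ), where ℓ̄(y, v) = [(1 − ρ)·ℓ(y, v) − ρ·ℓ(−y, v)]/(1 − 2ρ). -/
open MeasureTheory

/-- the ℓ-risk of a scorer s on the clean distribution D = (M, η)
equals the ℓ̄-risk of s on SLN(D, ρ) = (M, η̄), where
ℓ̄(y,v) = ((1−ρ)ℓ(y,v) − ρℓ(−y,v))/(1−2ρ) and η̄ = (1−2ρ)η + ρ.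
Risks are written by conditioning on the label: L^D_ℓ(s) =
∫ η(x)·ℓ(1, s(x)) + (1−η(x))·ℓ(−1, s(x)) dM(x). -/
theorem risk_eq_noise_corrected_risk {X : Type*} [MeasurableSpace X]
    (M : Measure X) [IsProbabilityMeasure M]
    (η : X → ℝ) (hη : ∀ x, η x ∈ Set.Icc (0 : ℝ) 1)
    (ℓ : ℝ → ℝ → ℝ) (ρ : ℝ) (hρ : ρ ∈ Set.Ico (0 : ℝ) (1/2)) (s : X → ℝ) :
    ∫ x, (η x * ℓ 1 (s x) + (1 - η x) * ℓ (-1) (s x)) ∂M =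
      ∫ x, (((1 - 2 * ρ) * η x + ρ) *
              (((1 - ρ) * ℓ 1 (s x) - ρ * ℓ (-1) (s x)) / (1 - 2 * ρ)) +
            (1 - ((1 - 2 * ρ) * η x + ρ)) *
              (((1 - ρ) * ℓ (-1) (s x) - ρ * ℓ 1 (s x)) / (1 - 2 * ρ))) ∂M := by
  have hne : (1 : ℝ) - 2 * ρ ≠ 0 := by
    have := hρ.2; intro h; nlinarith
  refine integral_congr_ae (Filter.Eventually.of_forall fun x => ?_)
  field_simp
  ring
end

section
/- For the unhinged loss ℓ and any bounded function class F_B = {s : X → ℝ | sup_x |s(x)| ≤ B} with B ≥ 1, and any scorer s ∈ F_B, the 0-1 regret of s over F_B is bounded by the unhinged regret: regret_{01}(s) ≤ regret_{unh}(s), where regret_ℓ(s) = L^D_ℓ(s) − inf_{t ∈ F_B} L^D_ℓ(t). -/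
open MeasureTheory

/-- The 0-1 risk of a scorer s on D = (M, η), conditioning on the label:
ℓ01(1,v) = 1[v<0] + ½·1[v=0], ℓ01(−1,v) = 1[v>0] + ½·1[v=0]. -/
noncomputable def zeroOneRisk {X : Type*} [MeasurableSpace X]
    (M : Measure X) (η : X → ℝ) (s : X → ℝ) : ℝ :=
  ∫ x, (η x * ((if s x < 0 then (1:ℝ) else 0) + (if s x = 0 then 1/2 else 0)) +
        (1 - η x) * ((if 0 < s x then (1:ℝ) else 0) + (if s x = 0 then 1/2 else 0))) ∂M

/-- The unhinged risk of a scorer s on D = (M, η). -/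
noncomputable def unhingedRisk {X : Type*} [MeasurableSpace X]
    (M : Measure X) (η : X → ℝ) (s : X → ℝ) : ℝ :=
  ∫ x, (η x * (1 - s x) + (1 - η x) * (1 + s x)) ∂M

lemma key_pt (η s B : ℝ) (h0 : 0 ≤ η) (h1 : η ≤ 1) (hB : 1 ≤ B) (hs : |s| ≤ B) :
    (η * ((if s < 0 then (1:ℝ) else 0) + (if s = 0 then 1/2 else 0)) +
     (1 - η) * ((if 0 < s then (1:ℝ) else 0) + (if s = 0 then 1/2 else 0))) - min η (1-η)
    ≤ (η * (1 - s) + (1 - η) * (1 + s)) - (1 - B * |2*η - 1|) := by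
  have habs := abs_le.mp hs
  rcases le_or_gt (2*η-1) 0 with hc|hc <;>
    [(rw [abs_of_nonpos hc, min_eq_left (by linarith)]);
     (rw [abs_of_pos hc, min_eq_right (by linarith)])] <;>
  rcases lt_trichotomy s 0 with h|h|h
  · rw [if_pos h, if_neg h.ne, if_neg (asymm h)]; nlinarith
  · subst h; norm_num; nlinarith
  · rw [if_neg (asymm h), if_neg h.ne', if_pos h]; nlinarith
  · rw [if_pos h, if_neg h.ne, if_neg (asymm h)]; nlinarith
  · subst h; norm_num; nlinarith
  · rw [if_neg (asymm h), if_neg h.ne', if_pos h]; nlinarith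

lemma lb01_pt (η t : ℝ) (h0 : 0 ≤ η) (h1 : η ≤ 1) :
    min η (1-η) ≤ η * ((if t < 0 then (1:ℝ) else 0) + (if t = 0 then 1/2 else 0)) +
      (1 - η) * ((if 0 < t then (1:ℝ) else 0) + (if t = 0 then 1/2 else 0)) := by
  have hm1 : min η (1-η) ≤ η := min_le_left _ _
  have hm2 : min η (1-η) ≤ 1-η := min_le_right _ _
  rcases lt_trichotomy t 0 with h|h|h
  · rw [if_pos h, if_neg h.ne, if_neg (asymm h)]; linarith
  · subst h; rcases le_total η (1-η) with he|he; · rw [min_eq_left he]; norm_num; linarith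
    rw [min_eq_right he]; norm_num; linarith
  · rw [if_neg (asymm h), if_neg h.ne', if_pos h]; linarith

lemma lbu_pt (η t B : ℝ) (ht : |t| ≤ B) :
    1 - B * |2*η - 1| ≤ η * (1 - t) + (1 - η) * (1 + t) := by
  have habs := abs_le.mp ht
  rcases le_or_gt (2*η-1) 0 with hc|hc
  · rw [abs_of_nonpos hc]; nlinarith
  · rw [abs_of_pos hc]; nlinarith

lemma bayes01_pt (η B : ℝ) (h0 : 0 ≤ η) (h1 : η ≤ 1) (hB : 1 ≤ B) :
    (η * ((if B * Real.sign (2*η-1) < 0 then (1:ℝ) else 0) +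
          (if B * Real.sign (2*η-1) = 0 then 1/2 else 0)) +
     (1 - η) * ((if 0 < B * Real.sign (2*η-1) then (1:ℝ) else 0) +
          (if B * Real.sign (2*η-1) = 0 then 1/2 else 0))) = min η (1-η) := by
  have hB0 : (0:ℝ) < B := by linarith
  rcases lt_trichotomy (2*η-1) 0 with hc|hc|hc
  · rw [Real.sign_of_neg hc]
    have hlt : B * (-1) < 0 := by linarith
    rw [if_pos hlt, if_neg hlt.ne, if_neg (by linarith : ¬ (0:ℝ) < B * (-1)),
      min_eq_left (by linarith)]
    ring
  · rw [hc, Real.sign_zero, mul_zero]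
    norm_num
    have : η = 1/2 := by linarith
    rw [this]; norm_num
  · rw [Real.sign_of_pos hc]
    have hlt : (0:ℝ) < B * 1 := by linarith
    rw [if_pos hlt, if_neg (by linarith : ¬ B * 1 < 0), if_neg hlt.ne',
      min_eq_right (by linarith)]
    ring

lemma bayesu_pt (η B : ℝ) :
    η * (1 - B * Real.sign (2*η-1)) + (1 - η) * (1 + B * Real.sign (2*η-1))
      = 1 - B * |2*η - 1| := by
  rcases lt_trichotomy (2*η-1) 0 with hc|hc|hc
  · rw [Real.sign_of_neg hc, abs_of_neg hc]; ring
  · rw [hc, Real.sign_zero]; simp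
  · rw [Real.sign_of_pos hc, abs_of_pos hc]; ring

lemma f01_bdd (η t : ℝ) (h0 : 0 ≤ η) (h1 : η ≤ 1) :
    |η * ((if t < 0 then (1:ℝ) else 0) + (if t = 0 then 1/2 else 0)) +
      (1 - η) * ((if 0 < t then (1:ℝ) else 0) + (if t = 0 then 1/2 else 0))| ≤ 2 := by
  rw [abs_le]
  rcases lt_trichotomy t 0 with h|h|h
  · rw [if_pos h, if_neg h.ne, if_neg (asymm h)]; constructor <;> nlinarith
  · subst h; norm_num; constructor <;> nlinarith
  · rw [if_neg (asymm h), if_neg h.ne', if_pos h]; constructor <;> nlinarith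

/-- over the bounded function class F_B (B ≥ 1), the 0-1 regret of
any scorer s ∈ F_B is bounded by its unhinged regret, provided the scorer
x ↦ B·sign(2η(x) − 1) is measurable (hence lies in F_B). -/
theorem zero_one_regret_le_unhinged_regret {X : Type*} [MeasurableSpace X]
    (M : Measure X) [IsProbabilityMeasure M]
    (η : X → ℝ) (hη : ∀ x, η x ∈ Set.Icc (0 : ℝ) 1) (hηm : Measurable η)
    (B : ℝ) (hB : 1 ≤ B)
    (hbayes : Measurable fun x => B * Real.sign (2 * η x - 1))
    (s : X → ℝ) (hs : Measurable s) (hsB : ∀ x, |s x| ≤ B) :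
    zeroOneRisk M η s -
      sInf {r : ℝ | ∃ t : X → ℝ, Measurable t ∧ (∀ x, |t x| ≤ B) ∧
        r = zeroOneRisk M η t} ≤
    unhingedRisk M η s -
      sInf {r : ℝ | ∃ t : X → ℝ, Measurable t ∧ (∀ x, |t x| ≤ B) ∧
        r = unhingedRisk M η t} := by
  have hB0 : (0:ℝ) < B := lt_of_lt_of_le one_pos hB
  -- generic integrability from bounds
  have intbdd : ∀ (f : X → ℝ) (C : ℝ), Measurable f → (∀ x, |f x| ≤ C) → Integrable f M :=
    fun f C hm hb => (integrable_const C).mono' hm.aestronglyMeasurable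
      (ae_of_all _ fun x => by simpa using hb x)
  -- measurability of the 0-1 integrand for a measurable t
  have m01 : ∀ (t : X → ℝ), Measurable t → Measurable (fun x =>
      η x * ((if t x < 0 then (1:ℝ) else 0) + (if t x = 0 then 1/2 else 0)) +
      (1 - η x) * ((if 0 < t x then (1:ℝ) else 0) + (if t x = 0 then 1/2 else 0))) := by
    intro t ht
    have h1 : Measurable (fun x => if t x < 0 then (1:ℝ) else 0) :=
      Measurable.ite (measurableSet_lt ht measurable_const) measurable_const measurable_const
    have h2 : Measurable (fun x => if t x = 0 then (1/2:ℝ) else 0) :=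
      Measurable.ite (ht (measurableSet_singleton 0)) measurable_const measurable_const
    have h3 : Measurable (fun x => if 0 < t x then (1:ℝ) else 0) :=
      Measurable.ite (measurableSet_lt measurable_const ht) measurable_const measurable_const
    exact (hηm.mul (h1.add h2)).add ((measurable_const.sub hηm).mul (h3.add h2))
  have int01 : ∀ (t : X → ℝ), Measurable t → Integrable (fun x =>
      η x * ((if t x < 0 then (1:ℝ) else 0) + (if t x = 0 then 1/2 else 0)) +
      (1 - η x) * ((if 0 < t x then (1:ℝ) else 0) + (if t x = 0 then 1/2 else 0))) M :=
    fun t ht => intbdd _ 2 (m01 t ht) (fun x => f01_bdd _ _ (hη x).1 (hη x).2)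
  have mu : ∀ (t : X → ℝ), Measurable t →
      Measurable (fun x => η x * (1 - t x) + (1 - η x) * (1 + t x)) :=
    fun t ht => (hηm.mul (measurable_const.sub ht)).add
      ((measurable_const.sub hηm).mul (measurable_const.add ht))
  have intu : ∀ (t : X → ℝ), Measurable t → (∀ x, |t x| ≤ B) →
      Integrable (fun x => η x * (1 - t x) + (1 - η x) * (1 + t x)) M := by
    intro t ht htB
    refine intbdd _ (1 + B) (mu t ht) (fun x => ?_)
    have h0 := (hη x).1; have h1 := (hη x).2
    have := abs_le.mp (htB x)
    rw [abs_le]; constructor <;> nlinarith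
  -- the minimizers
  have intg01 : Integrable (fun x => min (η x) (1 - η x)) M := by
    refine intbdd _ 1 (hηm.min (measurable_const.sub hηm)) (fun x => ?_)
    have h0 := (hη x).1; have h1 := (hη x).2
    rcases le_total (η x) (1 - η x) with he|he
    · rw [min_eq_left he, abs_le]; constructor <;> linarith
    · rw [min_eq_right he, abs_le]; constructor <;> linarith
  have intgu : Integrable (fun x => 1 - B * |2 * η x - 1|) M := by
    refine intbdd _ (1 + B) (measurable_const.sub
      (measurable_const.mul ((hηm.const_mul 2).sub_const 1).abs)) (fun x => ?_)
    have h0 := (hη x).1; have h1 := (hη x).2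
    have ha : |2 * η x - 1| ≤ 1 := by rw [abs_le]; constructor <;> linarith
    have ha0 : 0 ≤ |2 * η x - 1| := abs_nonneg _
    rw [abs_le]; constructor <;> nlinarith
  set t₀ : X → ℝ := fun x => B * Real.sign (2 * η x - 1) with ht₀
  have ht₀B : ∀ x, |t₀ x| ≤ B := by
    intro x
    rw [abs_mul, abs_of_pos hB0]
    have : |Real.sign (2 * η x - 1)| ≤ 1 := by
      rcases Real.sign_apply_eq (2 * η x - 1) with h|h|h <;> rw [h] <;> norm_num
    nlinarith
  -- sInf for 0-1
  have hL01 : sInf {r : ℝ | ∃ t : X → ℝ, Measurable t ∧ (∀ x, |t x| ≤ B) ∧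
      r = zeroOneRisk M η t} = ∫ x, min (η x) (1 - η x) ∂M := by
    apply le_antisymm
    · apply csInf_le
      · refine ⟨∫ x, min (η x) (1 - η x) ∂M - 1, ?_⟩
        rintro r ⟨t, ht, htB, rfl⟩
        have : ∫ x, min (η x) (1 - η x) ∂M ≤ zeroOneRisk M η t :=
          integral_mono intg01 (int01 t ht) (fun x => lb01_pt _ _ (hη x).1 (hη x).2)
        linarith
      · exact ⟨t₀, hbayes, ht₀B, by
          unfold zeroOneRisk
          exact (integral_congr_ae (ae_of_all _ fun x =>
            (bayes01_pt (η x) B (hη x).1 (hη x).2 hB))).symm⟩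
    · refine le_csInf ⟨zeroOneRisk M η t₀, t₀, hbayes, ht₀B, rfl⟩ ?_
      rintro r ⟨t, ht, htB, rfl⟩
      exact integral_mono intg01 (int01 t ht) (fun x => lb01_pt _ _ (hη x).1 (hη x).2)
  have hLu : sInf {r : ℝ | ∃ t : X → ℝ, Measurable t ∧ (∀ x, |t x| ≤ B) ∧
      r = unhingedRisk M η t} = ∫ x, (1 - B * |2 * η x - 1|) ∂M := by
    apply le_antisymm
    · apply csInf_le
      · refine ⟨∫ x, (1 - B * |2 * η x - 1|) ∂M - 1, ?_⟩
        rintro r ⟨t, ht, htB, rfl⟩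
        have : ∫ x, (1 - B * |2 * η x - 1|) ∂M ≤ unhingedRisk M η t :=
          integral_mono intgu (intu t ht htB) (fun x => lbu_pt _ _ _ (htB x))
        linarith
      · exact ⟨t₀, hbayes, ht₀B, by
          unfold unhingedRisk
          exact (integral_congr_ae (ae_of_all _ fun x =>
            (bayesu_pt (η x) B))).symm⟩
    · refine le_csInf ⟨unhingedRisk M η t₀, t₀, hbayes, ht₀B, rfl⟩ ?_
      rintro r ⟨t, ht, htB, rfl⟩
      exact integral_mono intgu (intu t ht htB) (fun x => lbu_pt _ _ _ (htB x))
  rw [hL01, hLu]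
  unfold zeroOneRisk unhingedRisk
  rw [← integral_sub (int01 s hs) intg01, ← integral_sub (intu s hs hsB) intgu]
  exact integral_mono ((int01 s hs).sub intg01) ((intu s hs hsB).sub intgu)
    (fun x => key_pt (η x) (s x) B (hη x).1 (hη x).2 hB (hsB x))
end

section
/- For the unhinged loss and any scorer s bounded by B, any distribution D and any ρ ∈ [0, 1/2), the unhinged regret on the clean distribution equals (1 − 2ρ)^{-1} times the unhinged regret on the corrupted distribution: regret^{D,F_B}_{unh}(s) = (1/(1 − 2ρ))·regret^{SLN(D,ρ),F_B}_{unh}(s). -/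
open MeasureTheory

/-- The unhinged regret of s over the class of scorers bounded by B. -/
noncomputable def unhingedRegret {X : Type*} [MeasurableSpace X]
    (M : Measure X) (η : X → ℝ) (B : ℝ) (s : X → ℝ) : ℝ :=
  unhingedRisk M η s -
    sInf {r : ℝ | ∃ t : X → ℝ, Measurable t ∧ (∀ x, |t x| ≤ B) ∧
      r = unhingedRisk M η t}

section Aux

variable {X : Type*} [MeasurableSpace X]

lemma unhinged_integrable (M : Measure X) [IsProbabilityMeasure M]
    (η : X → ℝ) (hη : ∀ x, η x ∈ Set.Icc (0 : ℝ) 1) (hηm : Measurable η)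
    {B : ℝ} {t : X → ℝ} (ht : Measurable t) (htB : ∀ x, |t x| ≤ B) :
    Integrable (fun x => η x * (1 - t x) + (1 - η x) * (1 + t x)) M := by
  apply Integrable.mono' (integrable_const (1 + 3 * B))
  · exact ((hηm.mul (measurable_const.sub ht)).add
      ((measurable_const.sub hηm).mul (measurable_const.add ht))).aestronglyMeasurable
  · refine ae_of_all _ fun x => ?_
    have h1 := (hη x).1; have h2 := (hη x).2
    have h3 := abs_le.mp (htB x)
    have hB0 : 0 ≤ B := le_trans (abs_nonneg _) (htB x)
    rw [Real.norm_eq_abs, abs_le]; constructor <;> nlinarith [h3.1, h3.2]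

lemma unhinged_risk_corrupt (M : Measure X) [IsProbabilityMeasure M]
    (η : X → ℝ) (hη : ∀ x, η x ∈ Set.Icc (0 : ℝ) 1) (hηm : Measurable η)
    (ρ : ℝ) {B : ℝ} {t : X → ℝ} (ht : Measurable t) (htB : ∀ x, |t x| ≤ B) :
    unhingedRisk M (fun x => (1 - 2 * ρ) * η x + ρ) t
      = (1 - 2 * ρ) * unhingedRisk M η t + 2 * ρ := by
  have hint := unhinged_integrable M η hη hηm ht htB
  unfold unhingedRisk
  have key : (fun x => ((1 - 2 * ρ) * η x + ρ) * (1 - t x)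
      + (1 - ((1 - 2 * ρ) * η x + ρ)) * (1 + t x))
      = fun x => (1 - 2 * ρ) * (η x * (1 - t x) + (1 - η x) * (1 + t x)) + 2 * ρ := by
    funext x; ring
  rw [key, integral_add (hint.const_mul _) (integrable_const _),
    integral_const_mul, integral_const]
  simp

lemma unhinged_risk_lb (M : Measure X) [IsProbabilityMeasure M]
    (η : X → ℝ) (hη : ∀ x, η x ∈ Set.Icc (0 : ℝ) 1) (hηm : Measurable η)
    {B : ℝ} {t : X → ℝ} (ht : Measurable t) (htB : ∀ x, |t x| ≤ B) :
    1 - B ≤ unhingedRisk M η t := by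
  have hint := unhinged_integrable M η hη hηm ht htB
  have : ∫ x, (1 - B : ℝ) ∂M ≤ ∫ x, (η x * (1 - t x) + (1 - η x) * (1 + t x)) ∂M := by
    refine integral_mono (integrable_const _) hint fun x => ?_
    have h1 := (hη x).1; have h2 := (hη x).2
    have h3 := abs_le.mp (htB x)
    nlinarith [h3.1, h3.2]
  simpa [unhingedRisk] using this

lemma sInf_affine_image (c d : ℝ) (hc : 0 < c) (S : Set ℝ)
    (hne : S.Nonempty) (hbd : BddBelow S) :
    sInf ((fun r => c * r + d) '' S) = c * sInf S + d := by
  obtain ⟨m, hm⟩ := hbd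
  have hbd' : BddBelow ((fun r => c * r + d) '' S) := by
    refine ⟨c * m + d, ?_⟩
    rintro _ ⟨r, hr, rfl⟩
    have := hm hr
    show c * m + d ≤ c * r + d
    nlinarith
  refine le_antisymm ?_ ?_
  · have h1 : ∀ r ∈ S, sInf ((fun r => c * r + d) '' S) ≤ c * r + d :=
      fun r hr => csInf_le hbd' ⟨r, hr, rfl⟩
    have h2 : (sInf ((fun r => c * r + d) '' S) - d) / c ≤ sInf S := by
      refine le_csInf hne fun r hr => ?_
      have := h1 r hr
      rw [div_le_iff₀ hc]; linarith
    have := (div_le_iff₀ hc).mp h2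
    linarith [mul_comm (sInf S) c]
  · refine le_csInf (hne.image _) ?_
    rintro _ ⟨r, hr, rfl⟩
    have : sInf S ≤ r := csInf_le ⟨m, hm⟩ hr
    show c * sInf S + d ≤ c * r + d
    nlinarith

end Aux

/-- the unhinged regret over F_B on the clean distribution
D = (M, η) equals (1 − 2ρ)⁻¹ times the unhinged regret on the corrupted
distribution SLN(D, ρ) = (M, (1−2ρ)η + ρ). -/
theorem unhinged_regret_clean_eq_corrupted {X : Type*} [MeasurableSpace X]
    (M : Measure X) [IsProbabilityMeasure M]
    (η : X → ℝ) (hη : ∀ x, η x ∈ Set.Icc (0 : ℝ) 1) (hηm : Measurable η)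
    (ρ : ℝ) (hρ : ρ ∈ Set.Ico (0 : ℝ) (1/2))
    (B : ℝ) (hB : 0 < B)
    (s : X → ℝ) (hs : Measurable s) (hsB : ∀ x, |s x| ≤ B) :
    unhingedRegret M η B s =
      (1 / (1 - 2 * ρ)) *
        unhingedRegret M (fun x => (1 - 2 * ρ) * η x + ρ) B s := by
  have hc : 0 < 1 - 2 * ρ := by have := hρ.2; linarith
  set c := 1 - 2 * ρ with hcdef
  set S : Set ℝ := {r : ℝ | ∃ t : X → ℝ, Measurable t ∧ (∀ x, |t x| ≤ B) ∧
      r = unhingedRisk M η t} with hS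
  have hne : S.Nonempty := by
    refine ⟨unhingedRisk M η (fun _ => 0), fun _ => 0, measurable_const, fun x => ?_, rfl⟩
    simpa using hB.le
  have hbd : BddBelow S := by
    refine ⟨1 - B, ?_⟩
    rintro r ⟨t, ht, htB, rfl⟩
    exact unhinged_risk_lb M η hη hηm ht htB
  have himg : {r : ℝ | ∃ t : X → ℝ, Measurable t ∧ (∀ x, |t x| ≤ B) ∧
      r = unhingedRisk M (fun x => (1 - 2 * ρ) * η x + ρ) t}
      = (fun r => c * r + 2 * ρ) '' S := by
    ext r
    constructor
    · rintro ⟨t, ht, htB, rfl⟩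
      exact ⟨unhingedRisk M η t, ⟨t, ht, htB, rfl⟩,
        (unhinged_risk_corrupt M η hη hηm ρ ht htB).symm⟩
    · rintro ⟨_, ⟨t, ht, htB, rfl⟩, rfl⟩
      exact ⟨t, ht, htB, by
        simpa using (unhinged_risk_corrupt M η hη hηm ρ ht htB).symm⟩
  have hrisk := unhinged_risk_corrupt M η hη hηm ρ hs hsB
  unfold unhingedRegret
  rw [himg, sInf_affine_image c (2 * ρ) hc S hne hbd, hrisk]
  field_simp
  ring
end

section
/- The label-weighted kernel mean map is preserved up to scaling under symmetric label noise: for any ρ ∈ [0, 1/2), E_{(X,Y)∼D}[Y·Φ(X)] = (1/(1 − 2ρ))·E_{(X,Y)∼SLN(D,ρ)}[Y·Φ(X)]. Consequently, the optimal regularised unhinged solutions on D and SLN(D,ρ) are positive-scalar multiples of each other. -/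
open MeasureTheory

/-- the label-weighted kernel mean map, written via the marginal M
and class-probability as E_{X∼M}[(2η(X) − 1)·Φ(X)], is preserved up to the
scaling 1/(1−2ρ) under symmetric label noise (η̄ = (1−2ρ)η + ρ); consequently
the optimal regularised unhinged solutions λ⁻¹·(mean) on the clean and
corrupted distributions are positive-scalar multiples of each other. -/
theorem mean_map_preserved_under_sln {X H : Type*} [MeasurableSpace X]
    [NormedAddCommGroup H] [InnerProductSpace ℝ H] [CompleteSpace H]
    (M : Measure X) [IsProbabilityMeasure M]
    (Φ : X → H) (η : X → ℝ) (hη : ∀ x, η x ∈ Set.Icc (0 : ℝ) 1)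
    (hint : Integrable (fun x => (2 * η x - 1) • Φ x) M)
    (ρ : ℝ) (hρ : ρ ∈ Set.Ico (0 : ℝ) (1/2))
    (lam : ℝ) (hlam : 0 < lam) :
    (∫ x, (2 * η x - 1) • Φ x ∂M) =
      (1 / (1 - 2 * ρ)) • ∫ x, (2 * ((1 - 2 * ρ) * η x + ρ) - 1) • Φ x ∂M ∧
    ∃ c : ℝ, 0 < c ∧
      lam⁻¹ • (∫ x, (2 * η x - 1) • Φ x ∂M) =
        c • (lam⁻¹ • ∫ x, (2 * ((1 - 2 * ρ) * η x + ρ) - 1) • Φ x ∂M) := by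
  have hne : (1 - 2 * ρ) ≠ 0 := by
    have := hρ.2; nlinarith [hρ.1]
  have key : (∫ x, (2 * ((1 - 2 * ρ) * η x + ρ) - 1) • Φ x ∂M) =
      (1 - 2 * ρ) • ∫ x, (2 * η x - 1) • Φ x ∂M := by
    rw [← integral_smul]
    congr 1
    funext x
    rw [smul_smul]
    ring_nf
  have h1 : (∫ x, (2 * η x - 1) • Φ x ∂M) =
      (1 / (1 - 2 * ρ)) • ∫ x, (2 * ((1 - 2 * ρ) * η x + ρ) - 1) • Φ x ∂M := by
    rw [key, smul_smul, one_div, inv_mul_cancel₀ hne, one_smul]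
  refine ⟨h1, 1 / (1 - 2 * ρ), div_pos one_pos (by nlinarith [hρ.2]), ?_⟩
  rw [h1, smul_comm]
end

section
/- In a Hilbert space H with feature map Φ bounded by R = sup_x ‖Φ(x)‖ < ∞: if the minimiser w* of the regularised hinge risk E[max(0, 1 − Y⟨w, Φ(X)⟩)] + (λ/2)‖w‖² satisfies ‖w*‖ ≤ 1/√λ, then for λ ≥ R², |⟨w*, Φ(x)⟩| ≤ 1 for all x ∈ X, so the hinge loss is active (i.e., max(0, 1 − Y⟨w*, Φ(x)⟩) = 1 − Y⟨w*, Φ(x)⟩) at every point, and hence w* coincides with the minimiser of the regularised unhinged risk E[1 − Y⟨w, Φ(X)⟩] + (λ/2)‖w‖². -/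
open MeasureTheory

/-- with features bounded by R, if the minimiser w* of the
regularised hinge objective satisfies ‖w*‖ ≤ 1/√λ and λ ≥ R², then all scores
|⟨w*, Φ(x)⟩| are at most 1, the hinge loss is active at every point
(max(0, 1 − y⟨w*, Φ(x)⟩) = 1 − y⟨w*, Φ(x)⟩ for y ∈ {±1}), and w* also
minimises the regularised unhinged objective. -/
theorem highly_regularised_svm_is_unhinged {X H : Type*} [MeasurableSpace X]
    [NormedAddCommGroup H] [InnerProductSpace ℝ H] [CompleteSpace H]
    [MeasurableSpace H] [BorelSpace H]
    (D : Measure (X × ℝ)) [IsProbabilityMeasure D]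
    (Φ : X → H) (hΦm : Measurable Φ)
    (R : ℝ) (hR : 0 < R) (hΦR : ∀ x, ‖Φ x‖ ≤ R)
    (hlabels : ∀ᵐ p ∂D, p.2 = 1 ∨ p.2 = -1)
    (lam : ℝ) (hlam : 0 < lam) (hlamR : R ^ 2 ≤ lam)
    (wstar : H)
    (hmin : ∀ w : H,
      (∫ p, max 0 (1 - p.2 * (inner ℝ wstar (Φ p.1) : ℝ)) ∂D) +
          lam / 2 * ‖wstar‖ ^ 2 ≤
        (∫ p, max 0 (1 - p.2 * (inner ℝ w (Φ p.1) : ℝ)) ∂D) +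
          lam / 2 * ‖w‖ ^ 2)
    (hnorm : ‖wstar‖ ≤ 1 / Real.sqrt lam) :
    (∀ x : X, |(inner ℝ wstar (Φ x) : ℝ)| ≤ 1) ∧
    (∀ x : X, ∀ y : ℝ, (y = 1 ∨ y = -1) →
      max 0 (1 - y * (inner ℝ wstar (Φ x) : ℝ)) =
        1 - y * (inner ℝ wstar (Φ x) : ℝ)) ∧
    (∀ w : H,
      (∫ p, (1 - p.2 * (inner ℝ wstar (Φ p.1) : ℝ)) ∂D) +
          lam / 2 * ‖wstar‖ ^ 2 ≤
        (∫ p, (1 - p.2 * (inner ℝ w (Φ p.1) : ℝ)) ∂D) +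
          lam / 2 * ‖w‖ ^ 2) := by
  have hsqrt_pos : 0 < Real.sqrt lam := Real.sqrt_pos.mpr hlam
  have hRsqrt : R ≤ Real.sqrt lam := by
    have := Real.sqrt_le_sqrt hlamR
    rwa [Real.sqrt_sq hR.le] at this
  -- Part 1: all scores of wstar are at most 1 in absolute value
  have hscore : ∀ x : X, |(inner ℝ wstar (Φ x) : ℝ)| ≤ 1 := by
    intro x
    calc |(inner ℝ wstar (Φ x) : ℝ)| ≤ ‖wstar‖ * ‖Φ x‖ := abs_real_inner_le_norm _ _
    _ ≤ (1 / Real.sqrt lam) * R := by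
        apply mul_le_mul hnorm (hΦR x) (norm_nonneg _)
        positivity
    _ ≤ 1 := by
        rw [one_div, inv_mul_le_iff₀ hsqrt_pos, mul_one]
        exact hRsqrt
  -- Part 2: hinge loss is active
  have hactive : ∀ (w : H), (∀ x, |(inner ℝ w (Φ x) : ℝ)| ≤ 1) →
      ∀ x : X, ∀ y : ℝ, (y = 1 ∨ y = -1) →
      max 0 (1 - y * (inner ℝ w (Φ x) : ℝ)) = 1 - y * (inner ℝ w (Φ x) : ℝ) := by
    intro w hw x y hy
    apply max_eq_right
    have h1 := abs_le.mp (hw x)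
    rcases hy with rfl | rfl <;> simp <;> linarith [h1.1, h1.2]
  -- Integrability of the score functions
  have hmeas : ∀ w : H, Measurable (fun p : X × ℝ => p.2 * (inner ℝ w (Φ p.1) : ℝ)) := by
    intro w
    exact measurable_snd.mul ((innerSL ℝ w).continuous.measurable.comp (hΦm.comp measurable_fst))
  have hbound : ∀ w : H, ∀ᵐ p ∂D, ‖p.2 * (inner ℝ w (Φ p.1) : ℝ)‖ ≤ ‖w‖ * R := by
    intro w
    filter_upwards [hlabels] with p hp
    have h1 : |(inner ℝ w (Φ p.1) : ℝ)| ≤ ‖w‖ * R := by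
      calc |(inner ℝ w (Φ p.1) : ℝ)| ≤ ‖w‖ * ‖Φ p.1‖ := abs_real_inner_le_norm _ _
      _ ≤ ‖w‖ * R := by
          exact mul_le_mul_of_nonneg_left (hΦR p.1) (norm_nonneg _)
    have : |p.2| = 1 := by rcases hp with h | h <;> simp [h]
    rw [Real.norm_eq_abs, abs_mul, this, one_mul]
    exact h1
  have hint : ∀ w : H, Integrable (fun p : X × ℝ => p.2 * (inner ℝ w (Φ p.1) : ℝ)) D := by
    intro w
    exact Integrable.mono' (integrable_const (‖w‖ * R))
      (hmeas w).aestronglyMeasurable (hbound w)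
  -- The linear functional w ↦ ∫ y ⟨w, Φ x⟩ and its Riesz representative μ
  have hRnn : (0:ℝ) ≤ R := hR.le
  set Lmap : H →ₗ[ℝ] ℝ :=
    { toFun := fun w => ∫ p, p.2 * (inner ℝ w (Φ p.1) : ℝ) ∂D
      map_add' := by
        intro w1 w2
        rw [← integral_add (hint w1) (hint w2)]
        apply integral_congr_ae
        filter_upwards with p
        rw [inner_add_left]; ring
      map_smul' := by
        intro c w
        simp only [RingHom.id_apply, smul_eq_mul]
        rw [← smul_eq_mul, ← integral_smul]
        apply integral_congr_ae
        filter_upwards with p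
        rw [smul_eq_mul, real_inner_smul_left]; ring } with hLmap
  have hLbound : ∀ w : H, ‖Lmap w‖ ≤ R * ‖w‖ := by
    intro w
    have := norm_integral_le_of_norm_le_const (C := ‖w‖ * R) (hbound w)
    simp only [measure_univ, ENNReal.toReal_one, probReal_univ, mul_one] at this
    calc ‖Lmap w‖ ≤ ‖w‖ * R := this
    _ = R * ‖w‖ := mul_comm _ _
  set L : H →L[ℝ] ℝ := LinearMap.mkContinuous Lmap R hLbound with hLdef
  set μ : H := (InnerProductSpace.toDual ℝ H).symm L with hμ
  have hμw : ∀ w : H, (inner ℝ μ w : ℝ) = ∫ p, p.2 * (inner ℝ w (Φ p.1) : ℝ) ∂D := by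
    intro w
    rw [hμ, InnerProductSpace.toDual_symm_apply]
    rfl
  have hμnorm : ‖μ‖ ≤ R := by
    rw [hμ, LinearIsometryEquiv.norm_map]
    exact LinearMap.mkContinuous_norm_le Lmap hRnn hLbound
  -- The unhinged risk formula
  have hunh : ∀ w : H, (∫ p, (1 - p.2 * (inner ℝ w (Φ p.1) : ℝ)) ∂D)
      = 1 - (inner ℝ μ w : ℝ) := by
    intro w
    rw [integral_sub (integrable_const 1) (hint w), integral_const, hμw w]
    simp
  -- The unhinged minimiser
  set wu : H := lam⁻¹ • μ with hwu
  have hμeq : μ = lam • wu := by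
    rw [hwu, smul_smul, mul_inv_cancel₀ hlam.ne', one_smul]
  have hwuscore : ∀ x : X, |(inner ℝ wu (Φ x) : ℝ)| ≤ 1 := by
    intro x
    rw [hwu, real_inner_smul_left, abs_mul, abs_of_pos (inv_pos.mpr hlam)]
    have h1 : |(inner ℝ μ (Φ x) : ℝ)| ≤ R * R := by
      calc |(inner ℝ μ (Φ x) : ℝ)| ≤ ‖μ‖ * ‖Φ x‖ := abs_real_inner_le_norm _ _
      _ ≤ R * R := mul_le_mul hμnorm (hΦR x) (norm_nonneg _) hRnn
    calc lam⁻¹ * |(inner ℝ μ (Φ x) : ℝ)| ≤ lam⁻¹ * (R * R) := by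
          exact mul_le_mul_of_nonneg_left h1 (inv_pos.mpr hlam).le
    _ ≤ 1 := by
        rw [inv_mul_le_iff₀ hlam, mul_one, ← sq]
        exact hlamR
  -- hinge = unhinged integral whenever all scores are ≤ 1
  have hcongr : ∀ w : H, (∀ x, |(inner ℝ w (Φ x) : ℝ)| ≤ 1) →
      (∫ p, max 0 (1 - p.2 * (inner ℝ w (Φ p.1) : ℝ)) ∂D)
        = ∫ p, (1 - p.2 * (inner ℝ w (Φ p.1) : ℝ)) ∂D := by
    intro w hw
    apply integral_congr_ae
    filter_upwards [hlabels] with p hp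
    exact hactive w hw p.1 p.2 hp
  -- wu minimises the quadratic unhinged objective
  have hquad : ∀ w : H,
      1 - (inner ℝ μ wu : ℝ) + lam / 2 * ‖wu‖ ^ 2 ≤
      1 - (inner ℝ μ w : ℝ) + lam / 2 * ‖w‖ ^ 2 := by
    intro w
    have h1 : (inner ℝ μ wu : ℝ) = lam * ‖wu‖ ^ 2 := by
      rw [hμeq, real_inner_smul_left, real_inner_self_eq_norm_sq]
    have h2 : (inner ℝ μ w : ℝ) = lam * (inner ℝ wu w : ℝ) := by
      rw [hμeq, real_inner_smul_left]
    have h3 : ‖wu - w‖ ^ 2 = ‖wu‖ ^ 2 - 2 * (inner ℝ wu w : ℝ) + ‖w‖ ^ 2 :=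
      norm_sub_sq_real wu w
    have h4 : 0 ≤ ‖wu - w‖ ^ 2 := sq_nonneg _
    nlinarith [h4, hlam]
  refine ⟨hscore, hactive wstar hscore, fun w => ?_⟩
  calc (∫ p, (1 - p.2 * (inner ℝ wstar (Φ p.1) : ℝ)) ∂D) + lam / 2 * ‖wstar‖ ^ 2
      = (∫ p, max 0 (1 - p.2 * (inner ℝ wstar (Φ p.1) : ℝ)) ∂D) + lam / 2 * ‖wstar‖ ^ 2 := by
        rw [hcongr wstar hscore]
    _ ≤ (∫ p, max 0 (1 - p.2 * (inner ℝ wu (Φ p.1) : ℝ)) ∂D) + lam / 2 * ‖wu‖ ^ 2 := hmin wu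
    _ = 1 - (inner ℝ μ wu : ℝ) + lam / 2 * ‖wu‖ ^ 2 := by
        rw [hcongr wu hwuscore, hunh wu]
    _ ≤ 1 - (inner ℝ μ w : ℝ) + lam / 2 * ‖w‖ ^ 2 := hquad w
    _ = (∫ p, (1 - p.2 * (inner ℝ w (Φ p.1) : ℝ)) ∂D) + lam / 2 * ‖w‖ ^ 2 := by
        rw [hunh w]
end
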